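/- Let n ≥ 4 be an even integer and Λ = Cay(D_{2n}, Ψ) with Ψ = {b, ab, ..., a^{n-1}b} ∪ {a^{n/2}}, and let N = {a^n, a^{n/2}, a^n b, a^{n/2} b}. Then S = V(Λ) \ N is not a strong resolving set of Λ: no vertex of S strongly resolves the adjacent pair a^n and a^{n/2}. -/

import Mathlib

/-- The Cayley graph of a group with connection set `S`. -/
def cayley {G : Type*} [Group G] (S : Set G) : SimpleGraph G :=
  SimpleGraph.fromRel (fun x y => x⁻¹ * y ∈ S)

/-- The connection set `Ψ = {b, ab, …, a^{n-1}b} ∪ {a^{n/2}}` in the dihedral group. -/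
def Psi (n : ℕ) : Set (DihedralGroup n) :=
  {x | ∃ i : ZMod n, x = DihedralGroup.sr i} ∪ {DihedralGroup.r ((n / 2 : ℕ) : ZMod n)}
/-- `w` strongly resolves `u` and `v`: one of them lies on a shortest path
between the other and `w`. -/
def StronglyResolves {V : Type*} (G : SimpleGraph V) (w u v : V) : Prop :=
  G.dist u w = G.dist u v + G.dist v w ∨ G.dist v w = G.dist v u + G.dist u w

/-- `S` is a strong resolving set of `G`. -/
def IsStrongResolvingSet {V : Type*} (G : SimpleGraph V) (S : Set V) : Prop :=
  ∀ u v : V, u ≠ v → ∃ w ∈ S, StronglyResolves G w u v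

namespace CayleyAux

open DihedralGroup SimpleGraph

lemma r_inv {n : ℕ} (i : ZMod n) : (r i : DihedralGroup n)⁻¹ = r (-i) :=
  inv_eq_of_mul_eq_one_right (by rw [r_mul_r, add_neg_cancel, ← one_def])

lemma adj_r_sr {n : ℕ} (i j : ZMod n) : (cayley (Psi n)).Adj (r i) (sr j) := by
  rw [cayley, SimpleGraph.fromRel_adj]
  refine ⟨by simp, Or.inl ?_⟩
  rw [r_inv, r_mul_sr]
  exact Or.inl ⟨j - -i, rfl⟩

lemma mem_psi_r {n : ℕ} (k : ZMod n) (h : r k ∈ Psi n) : k = ((n / 2 : ℕ) : ZMod n) := by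
  rcases h with ⟨i, hi⟩ | h
  · exact absurd hi (by simp)
  · simpa [DihedralGroup.r.injEq] using h

lemma not_adj_r_r {n : ℕ} (i j : ZMod n) (h1 : j - i ≠ ((n / 2 : ℕ) : ZMod n))
    (h2 : i - j ≠ ((n / 2 : ℕ) : ZMod n)) : ¬ (cayley (Psi n)).Adj (r i) (r j) := by
  rw [cayley, SimpleGraph.fromRel_adj]
  rintro ⟨-, h | h⟩
  · rw [r_inv, r_mul_r] at h
    exact h1 (by rw [← mem_psi_r _ h]; ring)
  · rw [r_inv, r_mul_r] at h
    exact h2 (by rw [← mem_psi_r _ h]; ring)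

lemma dist_r_r_eq_two {n : ℕ} (i j : ZMod n) (hne : i ≠ j)
    (h1 : j - i ≠ ((n / 2 : ℕ) : ZMod n)) (h2 : i - j ≠ ((n / 2 : ℕ) : ZMod n)) :
    (cayley (Psi n)).dist (r i) (r j) = 2 := by
  have hle : (cayley (Psi n)).dist (r i) (r j) ≤ 2 := by
    simpa using SimpleGraph.dist_le
      (Walk.cons (adj_r_sr i 0) (Walk.cons (adj_r_sr j 0).symm Walk.nil))
  have h0 : (cayley (Psi n)).dist (r i) (r j) ≠ 0 := by
    intro h
    rw [SimpleGraph.dist_eq_zero_iff_eq_or_not_reachable] at h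
    rcases h with h | h
    · exact hne (by simpa using h)
    · exact h ⟨Walk.cons (adj_r_sr i 0) (Walk.cons (adj_r_sr j 0).symm Walk.nil)⟩
  have hone : (cayley (Psi n)).dist (r i) (r j) ≠ 1 := fun h =>
    not_adj_r_r i j h1 h2 (SimpleGraph.dist_eq_one_iff_adj.mp h)
  omega

end CayleyAux

open DihedralGroup CayleyAux
theorem cayley_complement_clique_not_strong (n : ℕ) (hn : 4 ≤ n) (hev : Even n) :
    let a : DihedralGroup n := DihedralGroup.r 1
    let b : DihedralGroup n := DihedralGroup.sr 0
    let N : Set (DihedralGroup n) := {a ^ n, a ^ (n / 2), a ^ n * b, a ^ (n / 2) * b}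
    (cayley (Psi n)).Adj (a ^ n) (a ^ (n / 2)) ∧
    (∀ w ∈ Nᶜ, ¬ StronglyResolves (cayley (Psi n)) w (a ^ n) (a ^ (n / 2))) ∧
    ¬ IsStrongResolvingSet (cayley (Psi n)) Nᶜ := by
  intro a b N
  haveI : NeZero n := ⟨by omega⟩
  set m : ZMod n := ((n / 2 : ℕ) : ZMod n) with hm
  have hm0 : m ≠ 0 := by
    intro h
    rw [hm, ZMod.natCast_eq_zero_iff] at h
    have h2 : n ≤ n / 2 := Nat.le_of_dvd (by omega) h
    omega
  have hmm : m + m = 0 := by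
    obtain ⟨c, hc⟩ := hev
    have : ((n / 2 + n / 2 : ℕ) : ZMod n) = 0 := by
      rw [show n / 2 + n / 2 = n by omega, ZMod.natCast_self]
    push_cast at this
    exact this
  have hnegm : -m = m := by linear_combination -hmm
  have han : a ^ n = r 0 := by
    rw [show a = r 1 from rfl, r_one_pow, ZMod.natCast_self]
  have ham : a ^ (n / 2) = r m := by
    rw [show a = r 1 from rfl, r_one_pow]
  have hanb : a ^ n * b = sr 0 := by
    rw [han, show b = sr 0 from rfl, r_mul_sr, sub_zero]
  have hamb : a ^ (n / 2) * b = sr m := by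
    rw [ham, show b = sr 0 from rfl, r_mul_sr, zero_sub, hnegm]
  -- adjacency of u, v
  have hadj : (cayley (Psi n)).Adj (a ^ n) (a ^ (n / 2)) := by
    rw [han, ham, cayley, SimpleGraph.fromRel_adj]
    refine ⟨fun h => hm0 (r.inj h).symm, Or.inl ?_⟩
    rw [r_inv, neg_zero, r_mul_r, zero_add]
    exact Or.inr rfl
  have hduv : (cayley (Psi n)).dist (a ^ n) (a ^ (n / 2)) = 1 :=
    (SimpleGraph.dist_eq_one_iff_adj).2 hadj
  have key : ∀ w ∈ Nᶜ, ¬ StronglyResolves (cayley (Psi n)) w (a ^ n) (a ^ (n / 2)) := by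
    intro w hw hres
    simp only [N, Set.mem_compl_iff, Set.mem_insert_iff, Set.mem_singleton_iff, not_or] at hw
    obtain ⟨hw1, hw2, hw3, hw4⟩ := hw
    simp only [han, ham, hanb, hamb] at hw1 hw2 hw3 hw4
    have hdvu : (cayley (Psi n)).dist (a ^ (n/2)) (a ^ n) = 1 := by
      rw [SimpleGraph.dist_comm]; exact hduv
    rcases w with k | k
    · -- w = r k, k ≠ 0, k ≠ m
      have hk0 : k ≠ 0 := fun h => hw1 (by rw [h])
      have hkm : k ≠ m := fun h => hw2 (by rw [h])
      have d1 : (cayley (Psi n)).dist (a ^ n) (r k) = 2 := by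
        rw [han]
        refine dist_r_r_eq_two 0 k (fun h => hk0 h.symm) ?_ ?_
        · rwa [sub_zero]
        · rw [zero_sub]
          intro h
          exact hkm (by rw [← neg_neg k, h, ← hm, hnegm])
      have d2 : (cayley (Psi n)).dist (a ^ (n/2)) (r k) = 2 := by
        rw [ham]
        refine dist_r_r_eq_two m k (fun h => hkm h.symm) ?_ ?_
        · intro h
          exact hk0 (by linear_combination h + hmm)
        · intro h
          exact hk0 (by linear_combination -h)
      rcases hres with h | h
      · rw [d1, hduv, d2] at h; omega
      · rw [d2, hdvu, d1] at h; omega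
    · -- w = sr k
      have d1 : (cayley (Psi n)).dist (a ^ n) (sr k) = 1 := by
        rw [han, SimpleGraph.dist_eq_one_iff_adj]; exact adj_r_sr 0 k
      have d2 : (cayley (Psi n)).dist (a ^ (n/2)) (sr k) = 1 := by
        rw [ham, SimpleGraph.dist_eq_one_iff_adj]; exact adj_r_sr m k
      rcases hres with h | h
      · rw [d1, hduv, d2] at h; omega
      · rw [d2, hdvu, d1] at h; omega
  refine ⟨hadj, key, fun h => ?_⟩
  obtain ⟨w, hw, hres⟩ := h (a ^ n) (a ^ (n / 2)) (by rw [han, ham]; exact fun h => hm0 (r.inj h).symm)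
  exact key w hw hres
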